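/- The expected distance of an uncertain point is convex along any path of a tree: let G be a tree with graph distance dist, and let P be an uncertain point with locations p_1,…,p_m ∈ V and probabilities f_1,…,f_m, with expected distance D(v) = Σ_j f_j·dist(p_j, v). For any vertices u, v, w such that v lies on the path from u to w (i.e., dist(u,w) = dist(u,v) + dist(v,w)), one has D(v)·dist(u,w) ≤ dist(v,w)·D(u) + dist(u,v)·D(w). -/

import Mathlib

open SimpleGraph

/-- In a tree, any path realizes the distance. -/
private lemma tree_path_length {V : Type*} {G : SimpleGraph V} (hT : G.IsTree)
    {a b : V} (P : G.Walk a b) (hP : P.IsPath) : P.length = G.dist a b := by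
  obtain ⟨Q, hQ, hQl⟩ := hT.isConnected.exists_path_of_dist a b
  rw [(hT.existsUnique_path a b).unique hP hQ, hQl]

private lemma support_append_suffix {V : Type*} {G : SimpleGraph V} {a b c : V}
    (p : G.Walk a b) (q : G.Walk b c) :
    q.support <:+ (p.append q).support := by
  induction p with
  | nil => simp
  | cons r p' ih =>
    rw [SimpleGraph.Walk.cons_append, SimpleGraph.Walk.support_cons]
    exact (ih q).trans (List.suffix_cons _ _)

private lemma support_dropUntil_suffix {V : Type*} {G : SimpleGraph V} [DecidableEq V]
    {a b y : V} (p : G.Walk a b) (h : y ∈ p.support) :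
    (p.dropUntil y h).support <:+ p.support := by
  have := support_append_suffix (p.takeUntil y h) (p.dropUntil y h)
  rwa [SimpleGraph.Walk.take_spec] at this

/-- From a failed append of two paths, extract a common vertex in the tail. -/
private lemma exists_common_of_not_isPath {V : Type*} {G : SimpleGraph V}
    {a b c : V} {p : G.Walk a b} {q : G.Walk b c}
    (hp : p.IsPath) (hq : q.IsPath) (h : ¬ (p.append q).IsPath) :
    ∃ y, y ∈ p.support ∧ y ∈ q.support.tail := by
  rw [SimpleGraph.Walk.isPath_def, SimpleGraph.Walk.support_append,
    List.nodup_append] at h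
  push_neg at h
  have h1 := hp.support_nodup
  have h2 : q.support.tail.Nodup := hq.support_nodup.sublist (List.tail_sublist _)
  have := h h1 h2
  obtain ⟨y, hy1, z, hz, hyz⟩ := this
  exact ⟨y, hy1, hyz ▸ hz⟩

/-- Key tree lemma: if `v` lies on the path from `u` to `w`, then for any `x`,
`v` lies on the path from `x` to `u` or on the path from `x` to `w`. -/
private lemma tree_branch {V : Type*} {G : SimpleGraph V} (hT : G.IsTree)
    {u v w : V} (hv : G.dist u w = G.dist u v + G.dist v w) (x : V) :
    G.dist x u = G.dist x v + G.dist v u ∨ G.dist x w = G.dist x v + G.dist v w := by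
  classical
  have hc := hT.isConnected
  obtain ⟨Pu, hPu, hPul⟩ := hc.exists_path_of_dist v u
  obtain ⟨Pw, hPw, hPwl⟩ := hc.exists_path_of_dist v w
  obtain ⟨Q, hQ, hQl⟩ := hc.exists_path_of_dist x v
  have hR : (Pu.reverse.append Pw).IsPath := by
    apply SimpleGraph.Walk.isPath_of_length_eq_dist
    rw [SimpleGraph.Walk.length_append, SimpleGraph.Walk.length_reverse, hPul, hPwl]
    have := SimpleGraph.dist_comm (G := G) (u := v) (v := u)
    omega
  -- supports of Pu and Pw only meet at v
  have hdisj : ∀ y, y ∈ Pu.support → y ∈ Pw.support → y = v := by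
    intro y h1 h2
    by_contra hne
    have hn := hR.support_nodup
    rw [SimpleGraph.Walk.support_append, List.nodup_append] at hn
    have h1' : y ∈ Pu.reverse.support := by
      rwa [SimpleGraph.Walk.support_reverse, List.mem_reverse]
    have h2' : y ∈ Pw.support.tail := by
      have := SimpleGraph.Walk.support_eq_cons Pw
      rw [this] at h2
      rcases List.mem_cons.mp h2 with h2 | h2
      · exact absurd h2 hne
      · exact h2
    exact hn.2.2 y h1' y h2' rfl
  by_cases hpu : (Q.append Pu).IsPath
  · left
    rw [← tree_path_length hT _ hpu, SimpleGraph.Walk.length_append, hQl, hPul]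
  by_cases hpw : (Q.append Pw).IsPath
  · right
    rw [← tree_path_length hT _ hpw, SimpleGraph.Walk.length_append, hQl, hPwl]
  exfalso
  obtain ⟨y, hyQ, hyPu'⟩ := exists_common_of_not_isPath hQ hPu hpu
  obtain ⟨z, hzQ, hzPw'⟩ := exists_common_of_not_isPath hQ hPw hpw
  have hyPu : y ∈ Pu.support := List.mem_of_mem_tail hyPu'
  have hzPw : z ∈ Pw.support := List.mem_of_mem_tail hzPw'
  have hyv : y ≠ v := by
    intro h; subst h
    have := hPu.support_nodup
    rw [SimpleGraph.Walk.support_eq_cons Pu] at this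
    exact (List.nodup_cons.mp this).1 hyPu'
  have hzv : z ≠ v := by
    intro h; subst h
    have := hPw.support_nodup
    rw [SimpleGraph.Walk.support_eq_cons Pw] at this
    exact (List.nodup_cons.mp this).1 hzPw'
  -- the suffix of Q after y equals the reversed initial segment of Pu, etc.
  have key : ∀ (t : V) (htQ : t ∈ Q.support) (u' : V) (P : G.Walk v u') (hP : P.IsPath)
      (htP : t ∈ P.support) (s : V) (hs : s ∈ (Q.dropUntil t htQ).support),
      s ∈ P.support := by
    intro t htQ u' P hP htP s hs
    have h1 : (Q.dropUntil t htQ).IsPath := hQ.dropUntil htQ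
    have h2 : (P.takeUntil t htP).reverse.IsPath := (hP.takeUntil htP).reverse
    have heq : Q.dropUntil t htQ = (P.takeUntil t htP).reverse :=
      (hT.existsUnique_path t v).unique h1 h2
    rw [heq, SimpleGraph.Walk.support_reverse, List.mem_reverse] at hs
    exact SimpleGraph.Walk.support_takeUntil_subset P htP hs
  have hsy := support_dropUntil_suffix Q hyQ
  have hsz := support_dropUntil_suffix Q hzQ
  rcases List.suffix_or_suffix_of_suffix hsy hsz with hsuf | hsuf
  · -- drop y is a suffix of drop z, so y ∈ drop z support
    have : y ∈ (Q.dropUntil z hzQ).support :=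
      hsuf.subset (SimpleGraph.Walk.start_mem_support _)
    have : y ∈ Pw.support := key z hzQ w Pw hPw hzPw y this
    exact hyv (hdisj y hyPu this)
  · have : z ∈ (Q.dropUntil y hyQ).support :=
      hsuf.subset (SimpleGraph.Walk.start_mem_support _)
    have : z ∈ Pu.support := key y hyQ u Pu hPu hyPu z this
    exact hzv (hdisj z this hzPw)

/-- Pointwise convexity inequality in ℕ. -/
private lemma pointwise_ineq {V : Type*} {G : SimpleGraph V} (hT : G.IsTree)
    {u v w : V} (hv : G.dist u w = G.dist u v + G.dist v w) (x : V) :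
    G.dist x v * G.dist u w ≤ G.dist v w * G.dist x u + G.dist u v * G.dist x w := by
  have hc := hT.isConnected
  have c1 : G.dist v u = G.dist u v := SimpleGraph.dist_comm
  have c2 : G.dist w v = G.dist v w := SimpleGraph.dist_comm
  rcases tree_branch hT hv x with h | h
  · have ht : G.dist x v ≤ G.dist x w + G.dist w v := hc.dist_triangle
    have hm : G.dist x v * G.dist u v ≤ (G.dist x w + G.dist w v) * G.dist u v :=
      Nat.mul_le_mul_right _ ht
    nlinarith [hv, h, c1, c2, hm]
  · have ht : G.dist x v ≤ G.dist x u + G.dist u v := hc.dist_triangle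
    have hm : G.dist x v * G.dist v w ≤ (G.dist x u + G.dist u v) * G.dist v w :=
      Nat.mul_le_mul_right _ ht
    nlinarith [hv, h, c1, c2, hm]

/-- The expected distance of an uncertain point is convex along any path of a tree. -/
theorem expectedDist_convex_along_path {V : Type*} [Fintype V] (G : SimpleGraph V)
    (hT : G.IsTree) {m : ℕ} (p : Fin m → V) (f : Fin m → ℝ)
    (hf : ∀ j, 0 ≤ f j) (hsum : ∑ j, f j = 1)
    (u v w : V) (hv : G.dist u w = G.dist u v + G.dist v w) :
    (∑ j, f j * (G.dist (p j) v : ℝ)) * (G.dist u w : ℝ) ≤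
      (G.dist v w : ℝ) * (∑ j, f j * (G.dist (p j) u : ℝ)) +
        (G.dist u v : ℝ) * (∑ j, f j * (G.dist (p j) w : ℝ)) := by
  rw [Finset.sum_mul, Finset.mul_sum, Finset.mul_sum, ← Finset.sum_add_distrib]
  apply Finset.sum_le_sum
  intro j _
  have h := pointwise_ineq hT hv (p j)
  have hcast : (G.dist (p j) v : ℝ) * G.dist u w ≤
      (G.dist v w : ℝ) * G.dist (p j) u + (G.dist u v : ℝ) * G.dist (p j) w := by
    exact_mod_cast h
  nlinarith [mul_le_mul_of_nonneg_left hcast (hf j)]
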